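/- arXiv:1509.04372 — 2 statements merged into one kernel-verified Lean document; each statement's English description precedes it below -/
import Mathlib

section
/- For every finite alphabet Σ with |Σ| = q ≥ 1 and all positive integers n and M, the number of instances of the n-th Zimin word Z_n among words in Σ^{M+1} is at least q times the number of instances of Z_n among words in Σ^M, i.e., |Inst_{M+1}(Z_n,Σ)| ≥ q·|Inst_M(Z_n,Σ)|. -/
open Filter

/-- `U` is an instance of `V`: image of `V` under a nonerasing substitution. -/
def IsInstance {Γ β : Type*} (V : List Γ) (U : List β) : Prop :=
  ∃ φ : Γ → List β, (∀ x ∈ V, φ x ≠ []) ∧ U = (V.map φ).flatten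

/-- `W` encounters `V`: some factor of `W` is an instance of `V`. -/
def Encounters {Γ β : Type*} (V : List Γ) (W : List β) : Prop :=
  ∃ U : List β, U <:+: W ∧ IsInstance V U

/-- Zimin words over alphabet ℕ. -/
def Zimin : ℕ → List ℕ
  | 0 => []
  | n + 1 => Zimin n ++ [n] ++ Zimin n

/-- Least M such that every q-ary word of length M encounters Z_n. -/
noncomputable def fZ (n q : ℕ) : ℕ :=
  sInf {M | ∀ W : List (Fin q), W.length = M → Encounters (Zimin n) W}

/-- Exponential tower with b copies of a. -/
def tower (a : ℕ) : ℕ → ℕ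
  | 0 => 1
  | b + 1 => a ^ tower a b

/-- Number of length-M q-ary words that are instances of V. -/
noncomputable def instCount (V : List ℕ) (q M : ℕ) : ℕ :=
  Nat.card {W : Fin M → Fin q // IsInstance V (List.ofFn W)}

/-- Factor density d(V,W). -/
noncomputable def factorDensity {α : Type*} [DecidableEq α] (V W : List α) : ℝ :=
  (((((Finset.range (W.length + 1)) ×ˢ (Finset.range (W.length + 1))).filter
      (fun p => p.1 < p.2 ∧ (W.drop p.1).take (p.2 - p.1) = V)).card : ℝ)) /
    ((W.length : ℝ) + 1 - (V.length : ℝ))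

/-- Number of substrings of W (given by position pairs) that are V-instances. -/
noncomputable def instSubCount {Γ β : Type*} (V : List Γ) (W : List β) : ℕ :=
  Nat.card {p : ℕ × ℕ //
    p.1 < p.2 ∧ p.2 ≤ W.length ∧ IsInstance V ((W.drop p.1).take (p.2 - p.1))}

/-- Instance density δ(V,W). -/
noncomputable def instDensity {Γ β : Type*} (V : List Γ) (W : List β) : ℝ :=
  (instSubCount V W : ℝ) / ((W.length + 1).choose 2 : ℝ)

/-- q-liminf density of V. -/
noncomputable def liminfDensity {Γ : Type*} (V : List Γ) (q : ℕ) : ℝ :=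
  Filter.liminf (fun W : List (Fin q) => instDensity V W) (Filter.comap List.length Filter.atTop)

/-- Expected instance density of V in a uniformly random q-ary word of length n. -/
noncomputable def expDensity {Γ : Type*} (V : List Γ) (q n : ℕ) : ℝ :=
  (∑ W : Fin n → Fin q, instDensity V (List.ofFn W)) / (q : ℝ) ^ n

/-- Variance of the instance density of V in a uniformly random q-ary word of length n. -/
noncomputable def varDensity {Γ : Type*} (V : List Γ) (q n : ℕ) : ℝ :=
  (∑ W : Fin n → Fin q, (instDensity V (List.ofFn W) - expDensity V q n) ^ 2) / (q : ℝ) ^ n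

/-- Probability that a uniformly random q-ary word of length n is a V-instance. -/
noncomputable def instProb {Γ : Type*} (V : List Γ) (q n : ℕ) : ℝ :=
  (Nat.card {W : Fin n → Fin q // IsInstance V (List.ofFn W)} : ℝ) / (q : ℝ) ^ n

/-- V is doubled: every letter occurring in V occurs at least twice. -/
def Doubled {Γ : Type*} [DecidableEq Γ] (V : List Γ) : Prop :=
  ∀ x ∈ V, 2 ≤ V.count x

/-- Number of letter recurrences ‖V‖ = |V| - |L(V)|. -/
def recurCount {Γ : Type*} [DecidableEq Γ] (V : List Γ) : ℕ :=
  V.length - V.dedup.length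

section Stmt1Aux

lemma mem_zimin_lt {x n : ℕ} (h : x ∈ Zimin n) : x < n := by
  induction n with
  | zero => simp [Zimin] at h
  | succ n ih =>
    simp only [Zimin, List.mem_append, List.mem_singleton] at h
    rcases h with (h | h) | h
    · exact (ih h).trans (Nat.lt_succ_self n)
    · omega
    · exact (ih h).trans (Nat.lt_succ_self n)

lemma inst_succ {β : Type*} {m : ℕ} {W : List β} :
    IsInstance (Zimin (m + 1)) W ↔
      ∃ P B : List β, IsInstance (Zimin m) P ∧ B ≠ [] ∧ W = P ++ B ++ P := by
  constructor
  · rintro ⟨φ, h1, rfl⟩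
    refine ⟨((Zimin m).map φ).flatten, φ m, ⟨φ, fun x hx => h1 x (by simp [Zimin, hx]), rfl⟩,
      h1 m (by simp [Zimin]), ?_⟩
    simp [Zimin]
  · rintro ⟨P, B, ⟨ψ, hψ1, rfl⟩, hB, rfl⟩
    refine ⟨fun x => if x = m then B else ψ x, ?_, ?_⟩
    · intro x hx
      simp only [Zimin, List.mem_append, List.mem_singleton] at hx
      rcases hx with (hx | hx) | hx
      · simpa [Nat.ne_of_lt (mem_zimin_lt hx)] using hψ1 x hx
      · simpa [hx] using hB
      · simpa [Nat.ne_of_lt (mem_zimin_lt hx)] using hψ1 x hx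
    · have hmap : (Zimin m).map (fun x => if x = m then B else ψ x) = (Zimin m).map ψ :=
        List.map_congr_left fun x hx => by simp [Nat.ne_of_lt (mem_zimin_lt hx)]
      simp [Zimin, hmap]

/-- Canonical border decomposition. -/
def Bd {β : Type*} (m : ℕ) (W : List β) (k : ℕ) : Prop :=
  IsInstance (Zimin m) (W.take k) ∧ 2 * k < W.length ∧
    W = W.take k ++ (W.drop k).take (W.length - 2 * k) ++ W.take k

lemma bd_of_decomp {β : Type*} {m : ℕ} {P B W : List β}
    (hP : IsInstance (Zimin m) P) (hB : B ≠ []) (hW : W = P ++ B ++ P) :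
    Bd m W P.length := by
  have hlen : W.length = 2 * P.length + B.length := by
    subst hW; simp; omega
  have htake : W.take P.length = P := by
    rw [hW, List.append_assoc]; exact List.take_left' rfl
  have hdrop : W.drop P.length = B ++ P := by
    rw [hW, List.append_assoc]; exact List.drop_left' rfl
  have hBne : 0 < B.length := List.length_pos_iff.2 hB
  refine ⟨by rw [htake]; exact hP, by omega, ?_⟩
  rw [htake, hdrop, hlen]
  have h2 : 2 * P.length + B.length - 2 * P.length = B.length := by omega
  rw [h2, List.take_left' rfl]
  exact hW

lemma bd_take_length {β : Type*} {m k : ℕ} {W : List β} (h : Bd m W k) :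
    (W.take k).length = k := by
  have := h.2.1
  simp [List.length_take]; omega

lemma bd_mid_length {β : Type*} {m k : ℕ} {W : List β} (h : Bd m W k) :
    ((W.drop k).take (W.length - 2 * k)).length = W.length - 2 * k := by
  have := h.2.1
  simp [List.length_take, List.length_drop]; omega

lemma inst_iff_bd {β : Type*} {m : ℕ} {W : List β} :
    IsInstance (Zimin (m + 1)) W ↔ ∃ k, Bd m W k := by
  constructor
  · rw [inst_succ]
    rintro ⟨P, B, hP, hB, rfl⟩
    exact ⟨P.length, bd_of_decomp hP hB rfl⟩
  · rintro ⟨k, hk⟩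
    rw [inst_succ]
    refine ⟨W.take k, (W.drop k).take (W.length - 2 * k), hk.1, ?_, hk.2.2⟩
    have h1 := bd_mid_length hk
    have h2 := hk.2.1
    intro hcon
    rw [hcon] at h1
    simp at h1
    omega

/-- Insert letter `a` just before the final border of `W`. -/
def Gins {β : Type*} (a : β) (W : List β) (k : ℕ) : List β :=
  W.take k ++ (W.drop k).take (W.length - 2 * k) ++ [a] ++ W.take k

lemma G_length {β : Type*} {m k : ℕ} {a : β} {W : List β} (h : Bd m W k) :
    (Gins a W k).length = W.length + 1 := by
  have h1 := bd_take_length h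
  have h2 := bd_mid_length h
  have h3 := h.2.1
  simp [Gins, h1, h2]; omega

lemma G_decomp {β : Type*} {m k : ℕ} {a : β} {W : List β} (h : Bd m W k) :
    Gins a W k = W.take k ++ ((W.drop k).take (W.length - 2 * k) ++ [a]) ++ W.take k := by
  simp [Gins, List.append_assoc]

lemma bd_G {β : Type*} {m k : ℕ} {a : β} {W : List β} (h : Bd m W k) :
    Bd m (Gins a W k) k := by
  have htl := bd_take_length h
  have hd := bd_of_decomp (P := W.take k) (B := (W.drop k).take (W.length - 2 * k) ++ [a])
    h.1 (by simp) (G_decomp h)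
  rwa [htl] at hd

lemma inst_G {β : Type*} {m k : ℕ} {a : β} {W : List β} (h : Bd m W k) :
    IsInstance (Zimin (m + 1)) (Gins a W k) :=
  inst_iff_bd.2 ⟨k, bd_G h⟩

lemma pref_of_pref {β : Type*} {l₁ l₂ S : List β} (h1 : l₁ <+: S) (h2 : l₂ <+: S)
    (h : l₁.length ≤ l₂.length) : l₁ <+: l₂ := by
  obtain ⟨t, rfl⟩ := h2
  exact (List.isPrefix_append_of_length h).1 h1

lemma suff_of_suff {β : Type*} {l₁ l₂ S : List β} (h1 : l₁ <:+ S) (h2 : l₂ <:+ S)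
    (h : l₁.length ≤ l₂.length) : l₁ <:+ l₂ := by
  rw [← List.reverse_prefix] at h1 h2 ⊢
  exact pref_of_pref h1 h2 (by simpa using h)

lemma key {β : Type*} {m k k' : ℕ} {a a' : β} {W W' : List β}
    (h : Bd m W k) (h' : Bd m W' k') (hkk : k ≤ k')
    (heq : Gins a W k = Gins a' W' k') : Bd m W' k := by
  set P := W.take k with hP
  set P' := W'.take k' with hP'
  set B := (W.drop k).take (W.length - 2 * k) with hB
  set B' := (W'.drop k').take (W'.length - 2 * k') with hB'
  have hPl : P.length = k := bd_take_length h
  have hP'l : P'.length = k' := bd_take_length h'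
  have hSpre : P <+: Gins a W k := ⟨B ++ [a] ++ P, by simp [Gins, List.append_assoc]; rfl⟩
  have hSpre' : P' <+: Gins a W k := heq ▸ ⟨B' ++ [a'] ++ P', by simp [Gins, List.append_assoc]; rfl⟩
  have hSsuf : P <:+ Gins a W k := ⟨P ++ B ++ [a], by simp [Gins]; rfl⟩
  have hSsuf' : P' <:+ Gins a W k := heq ▸ ⟨P' ++ B' ++ [a'], by simp [Gins]; rfl⟩
  obtain ⟨D, hD⟩ := pref_of_pref hSpre hSpre' (by omega)
  obtain ⟨E, hE⟩ := suff_of_suff hSsuf hSsuf' (by omega)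
  have hB'ne : B' ≠ [] := by
    have h1 : B'.length = W'.length - 2 * k' := by rw [hB']; exact bd_mid_length h'
    have h2 := h'.2.1
    intro hcon; rw [hcon] at h1; simp at h1; omega
  have hW' : W' = P ++ (D ++ B' ++ E) ++ P := by
    calc W' = P' ++ B' ++ P' := h'.2.2
    _ = (P ++ D) ++ B' ++ (E ++ P) := by rw [hD, hE]
    _ = P ++ (D ++ B' ++ E) ++ P := by simp [List.append_assoc]
  have hbd := bd_of_decomp h.1 (B := D ++ B' ++ E) (by simp [hB'ne]) hW'
  rwa [hPl] at hbd

lemma G_inj {β : Type*} {m : ℕ} {a a' : β} {W W' : List β}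
    (hW : ∃ k, Bd m W k) (hW' : ∃ k, Bd m W' k)
    (heq : Gins a W (sInf {k | Bd m W k}) = Gins a' W' (sInf {k | Bd m W' k})) :
    a = a' ∧ W = W' := by
  set k := sInf {k | Bd m W k} with hk
  set k' := sInf {k | Bd m W' k} with hk'
  have hbd : Bd m W k := Nat.sInf_mem hW
  have hbd' : Bd m W' k' := Nat.sInf_mem hW'
  clear_value k k'
  have hkeq : k = k' := by
    rcases le_total k k' with hle | hle
    · refine le_antisymm hle ?_
      rw [hk']; exact Nat.sInf_le (key hbd hbd' hle heq)
    · refine le_antisymm ?_ hle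
      rw [hk]; exact Nat.sInf_le (key hbd' hbd hle heq.symm)
  subst hkeq
  have hPl : (W.take k).length = k := bd_take_length hbd
  have hP'l : (W'.take k).length = k := bd_take_length hbd'
  have hlen : W.length = W'.length := by
    have h1 := G_length (a := a) hbd
    have h2 := G_length (a := a') hbd'
    have h3 := congrArg List.length heq
    omega
  unfold Gins at heq
  rw [← hlen] at heq
  obtain ⟨hP, heq2⟩ := List.append_inj
    (by simpa [List.append_assoc] using heq) (by omega)
  have hmidlen : ((W.drop k).take (W.length - 2 * k)).length
      = ((W'.drop k).take (W.length - 2 * k)).length := by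
    have := bd_mid_length hbd
    have h2 := bd_mid_length hbd'
    rw [← hlen] at h2
    omega
  obtain ⟨hmid, heq3⟩ := List.append_inj (by simpa [List.append_assoc] using heq2) hmidlen
  obtain ⟨ha, hPend⟩ := List.cons_eq_cons.1 heq3
  refine ⟨ha, ?_⟩
  calc W = W.take k ++ (W.drop k).take (W.length - 2 * k) ++ W.take k := hbd.2.2
  _ = W'.take k ++ (W'.drop k).take (W'.length - 2 * k) ++ W'.take k := by
      rw [hP, hmid, hlen]
  _ = W' := hbd'.2.2.symm

end Stmt1Aux

lemma ofFn_get_cast {β : Type*} (L : List β) {N : ℕ} (h : L.length = N) :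
    List.ofFn (fun i : Fin N => L.get (Fin.cast h.symm i)) = L := by
  subst h; exact List.ofFn_get L

theorem stmt1 (q n M : ℕ) (hq : 1 ≤ q) (hn : 1 ≤ n) (hM : 1 ≤ M) :
    q * instCount (Zimin n) q M ≤ instCount (Zimin n) q (M + 1) := by
  obtain ⟨m, rfl⟩ : ∃ m, n = m + 1 := ⟨n - 1, by omega⟩
  unfold instCount
  let F : Fin q × {W : Fin M → Fin q // IsInstance (Zimin (m + 1)) (List.ofFn W)} →
      {W : Fin (M + 1) → Fin q // IsInstance (Zimin (m + 1)) (List.ofFn W)} :=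
    fun p =>
      have hbd : Bd m (List.ofFn p.2.1) (sInf {k | Bd m (List.ofFn p.2.1) k}) :=
        Nat.sInf_mem (inst_iff_bd.1 p.2.2)
      have hlen : (Gins p.1 (List.ofFn p.2.1) (sInf {k | Bd m (List.ofFn p.2.1) k})).length
          = M + 1 := by rw [G_length hbd]; simp
      ⟨fun i => (Gins p.1 (List.ofFn p.2.1) (sInf {k | Bd m (List.ofFn p.2.1) k})).get
          (Fin.cast hlen.symm i),
        by rw [ofFn_get_cast _ hlen]; exact inst_G hbd⟩
  have hFinj : Function.Injective F := by
    rintro ⟨a, W, hW⟩ ⟨a', W', hW'⟩ h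
    have hbd : Bd m (List.ofFn W) (sInf {k | Bd m (List.ofFn W) k}) :=
      Nat.sInf_mem (inst_iff_bd.1 hW)
    have hbd' : Bd m (List.ofFn W') (sInf {k | Bd m (List.ofFn W') k}) :=
      Nat.sInf_mem (inst_iff_bd.1 hW')
    have hlen : (Gins a (List.ofFn W) (sInf {k | Bd m (List.ofFn W) k})).length = M + 1 := by
      rw [G_length hbd]; simp
    have hlen' : (Gins a' (List.ofFn W') (sInf {k | Bd m (List.ofFn W') k})).length = M + 1 := by
      rw [G_length hbd']; simp
    have hval := congrArg Subtype.val h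
    have hG : Gins a (List.ofFn W) (sInf {k | Bd m (List.ofFn W) k})
        = Gins a' (List.ofFn W') (sInf {k | Bd m (List.ofFn W') k}) := by
      rw [← ofFn_get_cast _ hlen, ← ofFn_get_cast _ hlen']
      exact congrArg List.ofFn hval
    obtain ⟨ha, hLW⟩ := G_inj (inst_iff_bd.1 hW) (inst_iff_bd.1 hW') hG
    have hWW : W = W' := List.ofFn_injective hLW
    subst ha; subst hWW; rfl
  calc q * Nat.card {W : Fin M → Fin q // IsInstance (Zimin (m + 1)) (List.ofFn W)}
      = Nat.card (Fin q × {W : Fin M → Fin q // IsInstance (Zimin (m + 1)) (List.ofFn W)}) := by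
        simp [Nat.card_prod, Nat.card_eq_fintype_card]
    _ ≤ Nat.card {W : Fin (M + 1) → Fin q // IsInstance (Zimin (m + 1)) (List.ofFn W)} :=
        Nat.card_le_card_of_injective F hFinj
end

section
/- For all integers n ≥ 1, q ≥ 2, and M ≥ 1 satisfying (M+1)² ≤ 2 · q^{2^n − n − 1} · e^{−(n−1)/(q−1)}, there exists a q-ary word of length M that avoids the n-th Zimin word Z_n; consequently f(n,q) ≥ √(2 q^{2^n} / (q^{n+1} e^{(n−1)/(q−1)})) − 1. -/
open Filter

lemma zimin_mem_lt {n x : ℕ} (h : x ∈ Zimin n) : x < n := by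
  induction n with
  | zero => simp [Zimin] at h
  | succ m ih =>
    simp only [Zimin, List.mem_append, List.mem_singleton] at h
    rcases h with (h | h) | h
    · exact (ih h).trans (Nat.lt_succ_self m)
    · omega
    · exact (ih h).trans (Nat.lt_succ_self m)

lemma isInstance_zimin_succ {β : Type*} {n : ℕ} {U : List β} :
    IsInstance (Zimin (n+1)) U ↔
      ∃ A B : List β, IsInstance (Zimin n) A ∧ B ≠ [] ∧ U = A ++ B ++ A := by
  constructor
  · rintro ⟨φ, hφ, rfl⟩
    refine ⟨((Zimin n).map φ).flatten, φ n, ⟨φ, fun x hx => hφ x ?_, rfl⟩, hφ n ?_, ?_⟩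
    · simp [Zimin, hx]
    · simp [Zimin]
    · simp [Zimin]
  · rintro ⟨A, B, ⟨ψ, hψ, rfl⟩, hB, rfl⟩
    refine ⟨fun x => if x = n then B else ψ x, ?_, ?_⟩
    · intro x hx
      by_cases hxn : x = n
      · simpa [hxn] using hB
      · simp only [if_neg hxn]
        simp only [Zimin, List.mem_append, List.mem_singleton] at hx
        rcases hx with (hx | hx) | hx
        · exact hψ x hx
        · omega
        · exact hψ x hx
    · have key : ((Zimin n).map fun x => if x = n then B else ψ x) = (Zimin n).map ψ := by
        apply List.map_congr_left
        intro x hx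
        simp [Nat.ne_of_lt (zimin_mem_lt hx)]
      simp [Zimin, key]

lemma isInstance_zimin_length {β : Type*} {n : ℕ} {U : List β}
    (h : IsInstance (Zimin n) U) : 2 ^ n ≤ U.length + 1 := by
  induction n generalizing U with
  | zero => simp
  | succ m ih =>
    rcases isInstance_zimin_succ.mp h with ⟨A, B, hA, hB, rfl⟩
    have h1 := ih hA
    have h2 : 1 ≤ B.length := by
      cases B with
      | nil => simp at hB
      | cons a l => simp
    simp only [List.length_append]
    have : 2 ^ (m+1) = 2 ^ m + 2 ^ m := by ring
    omega

lemma isInstance_zimin_ne_nil {β : Type*} {n : ℕ} (hn : 1 ≤ n) {U : List β}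
    (h : IsInstance (Zimin n) U) : U ≠ [] := by
  have := isInstance_zimin_length h
  have h2 : 2 ≤ 2 ^ n := by
    calc 2 = 2 ^ 1 := by norm_num
    _ ≤ 2 ^ n := Nat.pow_le_pow_right (by norm_num) hn
  intro hU
  rw [hU] at this
  simp at this
  omega

lemma sub_inj {q L : ℕ} {P : List (Fin q) → Prop} :
    Function.Injective (fun u : {u : List (Fin q) // u.length = L ∧ P u} =>
      (⟨u.1, u.2.1⟩ : {u : List (Fin q) // u.length = L})) := by
  rintro ⟨a, ha⟩ ⟨b, hb⟩ hab
  simpa using hab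

lemma finite_len (q L : ℕ) : Finite {u : List (Fin q) // u.length = L} :=
  (inferInstance : Finite (List.Vector (Fin q) L))

lemma finite_len_sub (q L : ℕ) (P : List (Fin q) → Prop) :
    Finite {u : List (Fin q) // u.length = L ∧ P u} := by
  haveI := finite_len q L
  exact Finite.of_injective _ (sub_inj (P := P))

lemma card_words (q L : ℕ) : Nat.card {u : List (Fin q) // u.length = L} = q ^ L := by
  have h : Nat.card (List.Vector (Fin q) L) = q ^ L := by
    rw [Nat.card_eq_fintype_card, card_vector, Fintype.card_fin]
  exact h

lemma card_words_sub_le (q L : ℕ) (P : List (Fin q) → Prop) :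
    Nat.card {u : List (Fin q) // u.length = L ∧ P u} ≤ q ^ L := by
  rw [← card_words q L]
  haveI := finite_len q L
  exact Nat.card_le_card_of_injective _ (sub_inj (P := P))

lemma card_words_prop_le (q L : ℕ) (c : Prop) [Decidable c] :
    Nat.card {u : List (Fin q) // u.length = L ∧ c} ≤ if c then q ^ L else 0 := by
  by_cases hc : c
  · rw [if_pos hc]
    exact card_words_sub_le q L _
  · rw [if_neg hc]
    have : IsEmpty {u : List (Fin q) // u.length = L ∧ c} := ⟨fun u => hc u.2.2⟩
    simp [Nat.card_of_isEmpty]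

lemma nat_card_sigma {ι : Type*} [Fintype ι] (β : ι → Type*) [∀ i, Finite (β i)] :
    Nat.card ((i : ι) × β i) = ∑ i, Nat.card (β i) := by
  classical
  letI : ∀ i, Fintype (β i) := fun i => Fintype.ofFinite _
  simp [Nat.card_eq_fintype_card, Fintype.card_sigma]

/-- Number of Zimin-instance words of given length. -/
noncomputable def IC (q n L : ℕ) : ℕ :=
  Nat.card {u : List (Fin q) // u.length = L ∧ IsInstance (Zimin n) u}

lemma IC_le (q n L : ℕ) : IC q n L ≤ q ^ L := card_words_sub_le q L _

lemma IC_eq_zero (q n L : ℕ) (h : L + 1 < 2 ^ n) : IC q n L = 0 := by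
  have : IsEmpty {u : List (Fin q) // u.length = L ∧ IsInstance (Zimin n) u} := by
    refine ⟨fun u => ?_⟩
    have := isInstance_zimin_length u.2.2
    rw [u.2.1] at this
    omega
  simp [IC, Nat.card_of_isEmpty]


lemma IC_succ_le (q n L : ℕ) :
    IC q (n+1) L ≤ ∑ a ∈ Finset.range L,
      (if 2*a < L then IC q n a * q ^ (L - 2*a) else 0) := by
  classical
  set T := (a : Fin L) ×
      ({A : List (Fin q) // A.length = (a:ℕ) ∧ IsInstance (Zimin n) A} ×
       {B : List (Fin q) // B.length = L - 2*(a:ℕ) ∧ 2*(a:ℕ) < L}) with hT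
  haveI : ∀ a : Fin L, Finite
      ({A : List (Fin q) // A.length = (a:ℕ) ∧ IsInstance (Zimin n) A} ×
       {B : List (Fin q) // B.length = L - 2*(a:ℕ) ∧ 2*(a:ℕ) < L}) := by
    intro a
    haveI := finite_len_sub q (a:ℕ) (IsInstance (Zimin n))
    haveI := finite_len_sub q (L - 2*(a:ℕ)) (fun _ => 2*(a:ℕ) < L)
    infer_instance
  have hsurj : ∃ g : T → {u : List (Fin q) // u.length = L ∧ IsInstance (Zimin (n+1)) u},
      Function.Surjective g := by
    refine ⟨fun ⟨a, A, B⟩ => ⟨A.1 ++ B.1 ++ A.1, ?_, ?_⟩, ?_⟩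
    · have h1 := A.2.1; have h2 := B.2.1; have h3 := B.2.2
      simp only [List.length_append]
      omega
    · exact isInstance_zimin_succ.mpr ⟨A.1, B.1, A.2.2,
        fun hB => by have h2 := B.2.1; have h3 := B.2.2; rw [hB] at h2; simp at h2; omega,
        rfl⟩
    · rintro ⟨u, hlen, hinst⟩
      obtain ⟨A, B, hA, hB, rfl⟩ := isInstance_zimin_succ.mp hinst
      have hBlen : 1 ≤ B.length := by
        cases B with
        | nil => simp at hB
        | cons a l => simp
      have hlen' : 2 * A.length + B.length = L := by
        simp only [List.length_append] at hlen; omega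
      have haL : A.length < L := by omega
      refine ⟨⟨⟨A.length, haL⟩, ⟨A, rfl, hA⟩, ⟨B, ?_, ?_⟩⟩, rfl⟩
      · simp only [Fin.val_mk]; omega
      · simp only [Fin.val_mk]; omega
  obtain ⟨g, hg⟩ := hsurj
  haveI : Finite T := by infer_instance
  calc IC q (n+1) L ≤ Nat.card T := Nat.card_le_card_of_surjective g hg
  _ = ∑ a : Fin L, (Nat.card {A : List (Fin q) // A.length = (a:ℕ) ∧ IsInstance (Zimin n) A}
        * Nat.card {B : List (Fin q) // B.length = L - 2*(a:ℕ) ∧ 2*(a:ℕ) < L}) := by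
      rw [hT, nat_card_sigma]
      exact Finset.sum_congr rfl (fun a _ => Nat.card_prod _ _)
  _ = ∑ a ∈ Finset.range L, (Nat.card {A : List (Fin q) // A.length = a ∧ IsInstance (Zimin n) A}
        * Nat.card {B : List (Fin q) // B.length = L - 2*a ∧ 2*a < L}) :=
      Fin.sum_univ_eq_sum_range (fun a => Nat.card {A : List (Fin q) // A.length = a ∧ IsInstance (Zimin n) A}
        * Nat.card {B : List (Fin q) // B.length = L - 2*a ∧ 2*a < L}) L
  _ ≤ _ := by
      apply Finset.sum_le_sum
      intro a _
      by_cases hc : 2*a < L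
      · rw [if_pos hc]
        exact Nat.mul_le_mul le_rfl (by simpa [if_pos hc] using card_words_prop_le q (L-2*a) (2*a < L))
      · rw [if_neg hc]
        have h0 := card_words_prop_le q (L-2*a) (2*a < L)
        rw [if_neg hc] at h0
        rw [Nat.le_zero.mp h0]
        simp


lemma geom_tail_le {x : ℝ} (hx : 1 < x) (m L : ℕ) :
    ∑ a ∈ Finset.Ico m L, x ^ (L - a) ≤ x ^ (L - m) * (x / (x - 1)) := by
  have hx0 : 0 < x := by linarith
  have hx1 : 0 < x - 1 := by linarith
  rw [Finset.sum_Ico_eq_sum_range]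
  set K := L - m with hK
  have h1 : ∑ k ∈ Finset.range K, x ^ (L - (m + k)) = ∑ k ∈ Finset.range K, x ^ (K - k) := by
    apply Finset.sum_congr rfl
    intro k hk
    rw [Finset.mem_range] at hk
    congr 1
    omega
  rw [h1]
  have h2 : ∑ k ∈ Finset.range K, x ^ (K - k) = ∑ k ∈ Finset.range K, x ^ (k + 1) := by
    have h3 := Finset.sum_range_reflect (fun j => x ^ (j + 1)) K
    rw [← h3]
    apply Finset.sum_congr rfl
    intro k hk
    rw [Finset.mem_range] at hk
    congr 1
    omega
  rw [h2]
  have h4 : ∑ k ∈ Finset.range K, x ^ (k + 1) = x * ((x ^ K - 1) / (x - 1)) := by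
    rw [← geom_sum_eq (by linarith : x ≠ 1) K, Finset.mul_sum]
    apply Finset.sum_congr rfl
    intro k _
    ring
  rw [h4]
  have h5 : x * ((x ^ K - 1) / (x - 1)) ≤ x * (x ^ K / (x - 1)) := by
    gcongr
    linarith
  calc x * ((x ^ K - 1) / (x - 1)) ≤ x * (x ^ K / (x - 1)) := h5
  _ = x ^ K * (x / (x - 1)) := by ring

lemma D_succ (n : ℕ) : 2 ^ (n+1) - (n+1) - 1 = (2 ^ n - n - 1) + (2 ^ n - 1) := by
  have h := Nat.lt_two_pow_self (n := n)
  have h2 : 2 ^ (n+1) = 2 ^ n + 2 ^ n := by ring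
  omega

lemma IC_bound (q : ℕ) (hq : 2 ≤ q) : ∀ n, 1 ≤ n → ∀ L : ℕ,
    (IC q n L : ℝ) ≤ ((q:ℝ)/((q:ℝ)-1))^(n-1) * (q:ℝ)^L / (q:ℝ)^(2^n - n - 1) := by
  have hq1 : (1:ℝ) < (q:ℝ) := by exact_mod_cast hq.trans_lt' one_lt_two
  have hq0 : (0:ℝ) < (q:ℝ) := by linarith
  have hqm : (0:ℝ) < (q:ℝ) - 1 := by linarith
  intro n hn
  induction n, hn using Nat.le_induction with
  | base =>
    intro L
    simp only [pow_zero, Nat.sub_self, one_mul]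
    have h1 : (IC q 1 L : ℝ) ≤ (q:ℝ)^L := by
      exact_mod_cast Nat.cast_le.mpr (IC_le q 1 L) |>.trans_eq (by push_cast; ring)
    calc (IC q 1 L : ℝ) ≤ (q:ℝ)^L := h1
    _ = (q:ℝ)^L / (q:ℝ)^(2^1 - 1 - 1) := by norm_num
  | succ n hn ih =>
    intro L
    set c : ℝ := ((q:ℝ)/((q:ℝ)-1))^(n-1) with hc
    have hc0 : 0 < c := pow_pos (div_pos hq0 hqm) _
    set D : ℕ := 2^n - n - 1 with hD
    set m : ℕ := 2^n - 1 with hm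
    have hkey : (IC q (n+1) L : ℝ) ≤ ∑ a ∈ Finset.range L,
        (if 2*a < L ∧ m ≤ a then c / (q:ℝ)^D * (q:ℝ)^(L - a) else 0) := by
      calc (IC q (n+1) L : ℝ)
          ≤ ((∑ a ∈ Finset.range L, (if 2*a < L then IC q n a * q ^ (L - 2*a) else 0) : ℕ) : ℝ) := by
            exact_mod_cast IC_succ_le q n L
      _ = ∑ a ∈ Finset.range L, ((if 2*a < L then ((IC q n a : ℝ)) * (q:ℝ) ^ (L - 2*a) else 0)) := by
            push_cast
            apply Finset.sum_congr rfl
            intro a _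
            split <;> push_cast <;> ring
      _ ≤ _ := by
            apply Finset.sum_le_sum
            intro a _
            by_cases h1 : 2*a < L
            · by_cases h2 : m ≤ a
              · rw [if_pos h1, if_pos ⟨h1, h2⟩]
                have hICa := ih a
                have hqa : (0:ℝ) < (q:ℝ)^(L-2*a) := pow_pos hq0 _
                calc (IC q n a : ℝ) * (q:ℝ)^(L-2*a)
                    ≤ (c * (q:ℝ)^a / (q:ℝ)^D) * (q:ℝ)^(L-2*a) := by
                      apply mul_le_mul_of_nonneg_right hICa (le_of_lt hqa)
                _ = c / (q:ℝ)^D * ((q:ℝ)^a * (q:ℝ)^(L-2*a)) := by ring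
                _ = c / (q:ℝ)^D * (q:ℝ)^(L - a) := by
                      have hE : a + (L - 2*a) = L - a := by omega
                      rw [← pow_add, hE]
              · rw [if_pos h1, if_neg (by tauto)]
                have h3 : IC q n a = 0 := by
                  apply IC_eq_zero
                  have h4 : 1 ≤ 2^n := Nat.one_le_two_pow
                  omega
                simp [h3]
            · rw [if_neg h1, if_neg (by tauto)]
    by_cases hLm : m < L
    · have hsum : ∑ a ∈ Finset.range L,
          (if 2*a < L ∧ m ≤ a then c / (q:ℝ)^D * (q:ℝ)^(L - a) else 0)
          ≤ c / (q:ℝ)^D * ((q:ℝ)^(L-m) * ((q:ℝ)/((q:ℝ)-1))) := by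
        have hstep : ∑ a ∈ Finset.range L,
            (if 2*a < L ∧ m ≤ a then c / (q:ℝ)^D * (q:ℝ)^(L - a) else 0)
            ≤ ∑ a ∈ Finset.Ico m L, c / (q:ℝ)^D * (q:ℝ)^(L - a) := by
          classical
          have : ∀ a ∈ Finset.range L,
              (if 2*a < L ∧ m ≤ a then c / (q:ℝ)^D * (q:ℝ)^(L - a) else 0)
              ≤ (if a ∈ Finset.Ico m L then c / (q:ℝ)^D * (q:ℝ)^(L - a) else 0) := by
            intro a ha
            rw [Finset.mem_range] at ha
            by_cases h1 : 2*a < L ∧ m ≤ a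
            · rw [if_pos h1, if_pos (Finset.mem_Ico.mpr ⟨h1.2, ha⟩)]
            · rw [if_neg h1]
              split
              · positivity
              · exact le_rfl
          calc _ ≤ ∑ a ∈ Finset.range L,
              (if a ∈ Finset.Ico m L then c / (q:ℝ)^D * (q:ℝ)^(L - a) else 0) :=
                Finset.sum_le_sum this
          _ = ∑ a ∈ Finset.range L ∩ Finset.Ico m L, c / (q:ℝ)^D * (q:ℝ)^(L - a) :=
                Finset.sum_ite_mem _ _ _
          _ = ∑ a ∈ Finset.Ico m L, c / (q:ℝ)^D * (q:ℝ)^(L - a) := by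
                congr 1
                rw [Finset.inter_eq_right]
                intro a ha
                rw [Finset.mem_Ico] at ha
                exact Finset.mem_range.mpr ha.2
        calc _ ≤ ∑ a ∈ Finset.Ico m L, c / (q:ℝ)^D * (q:ℝ)^(L - a) := hstep
        _ = c / (q:ℝ)^D * ∑ a ∈ Finset.Ico m L, (q:ℝ)^(L - a) := by rw [Finset.mul_sum]
        _ ≤ c / (q:ℝ)^D * ((q:ℝ)^(L-m) * ((q:ℝ)/((q:ℝ)-1))) := by
              apply mul_le_mul_of_nonneg_left (geom_tail_le hq1 m L)
              positivity
      have hpow : ((q:ℝ))^(L-m) = (q:ℝ)^L / (q:ℝ)^m := by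
        rw [eq_div_iff (pow_ne_zero _ (ne_of_gt hq0)), ← pow_add]
        congr 1
        omega
      have hcn : ((q:ℝ)/((q:ℝ)-1))^(n+1-1) = c * ((q:ℝ)/((q:ℝ)-1)) := by
        rw [hc, ← pow_succ]
        congr 1
        omega
      have hD' : (2^(n+1) - (n+1) - 1) = D + m := by rw [hD, hm]; exact D_succ n
      calc (IC q (n+1) L : ℝ) ≤ c / (q:ℝ)^D * ((q:ℝ)^(L-m) * ((q:ℝ)/((q:ℝ)-1))) :=
            hkey.trans hsum
      _ = ((q:ℝ)/((q:ℝ)-1))^(n+1-1) * (q:ℝ)^L / (q:ℝ)^(2^(n+1)-(n+1)-1) := by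
            rw [hpow, hcn, hD', pow_add]
            field_simp
    · have hzero : ∑ a ∈ Finset.range L,
          (if 2*a < L ∧ m ≤ a then c / (q:ℝ)^D * (q:ℝ)^(L - a) else 0) = 0 := by
        apply Finset.sum_eq_zero
        intro a ha
        rw [Finset.mem_range] at ha
        rw [if_neg]
        rintro ⟨-, h2⟩
        omega
      have hpos : (0:ℝ) ≤ ((q:ℝ)/((q:ℝ)-1))^(n+1-1) * (q:ℝ)^L / (q:ℝ)^(2^(n+1)-(n+1)-1) := by
        positivity
      have := hkey.trans_eq hzero
      linarith


lemma mid_card_le (q n ℓ : ℕ) (c : Prop) [Decidable c] :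
    Nat.card {U : List (Fin q) // U.length = ℓ ∧ IsInstance (Zimin n) U ∧ c}
      ≤ if c then IC q n ℓ else 0 := by
  by_cases hc : c
  · rw [if_pos hc]
    haveI := finite_len_sub q ℓ (IsInstance (Zimin n))
    exact Nat.card_le_card_of_injective
      (fun u => (⟨u.1, u.2.1, u.2.2.1⟩ :
        {u : List (Fin q) // u.length = ℓ ∧ IsInstance (Zimin n) u}))
      (by rintro ⟨a, ha⟩ ⟨b, hb⟩ hab; simpa using hab)
  · rw [if_neg hc]
    have : IsEmpty {U : List (Fin q) // U.length = ℓ ∧ IsInstance (Zimin n) U ∧ c} :=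
      ⟨fun u => hc u.2.2.2⟩
    simp [Nat.card_of_isEmpty]

lemma EC_le (q n M : ℕ) :
    Nat.card {W : List (Fin q) // W.length = M ∧ Encounters (Zimin n) W}
      ≤ ∑ p : Fin (M+1) × Fin (M+1),
          q^(p.1:ℕ) *
          Nat.card {U : List (Fin q) // U.length = (p.2:ℕ) ∧ IsInstance (Zimin n) U ∧
            (p.1:ℕ) + (p.2:ℕ) ≤ M} *
          q^(M-(p.1:ℕ)-(p.2:ℕ)) := by
  classical
  set T := (p : Fin (M+1) × Fin (M+1)) ×
      ({s : List (Fin q) // s.length = (p.1:ℕ)} ×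
       {U : List (Fin q) // U.length = (p.2:ℕ) ∧ IsInstance (Zimin n) U ∧
          (p.1:ℕ) + (p.2:ℕ) ≤ M} ×
       {t : List (Fin q) // t.length = M - (p.1:ℕ) - (p.2:ℕ)}) with hT
  haveI hfin : ∀ p : Fin (M+1) × Fin (M+1), Finite
      ({s : List (Fin q) // s.length = (p.1:ℕ)} ×
       {U : List (Fin q) // U.length = (p.2:ℕ) ∧ IsInstance (Zimin n) U ∧
          (p.1:ℕ) + (p.2:ℕ) ≤ M} ×
       {t : List (Fin q) // t.length = M - (p.1:ℕ) - (p.2:ℕ)}) := by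
    intro p
    haveI := finite_len q (p.1:ℕ)
    haveI := finite_len q (M-(p.1:ℕ)-(p.2:ℕ))
    haveI := finite_len_sub q (p.2:ℕ)
      (fun U => IsInstance (Zimin n) U ∧ (p.1:ℕ) + (p.2:ℕ) ≤ M)
    have e : ∀ (P Q : List (Fin q) → Prop) (L : ℕ),
        {u : List (Fin q) // u.length = L ∧ P u ∧ Q u} =
        {u : List (Fin q) // u.length = L ∧ (fun v => P v ∧ Q v) u} := by intro _ _ _; rfl
    infer_instance
  have hsurj : ∃ g : T → {W : List (Fin q) // W.length = M ∧ Encounters (Zimin n) W},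
      Function.Surjective g := by
    refine ⟨fun ⟨p, s, U, t⟩ => ⟨s.1 ++ U.1 ++ t.1, ?_, ?_⟩, ?_⟩
    · have h1 := s.2; have h2 := U.2.1; have h3 := U.2.2.2; have h4 := t.2
      simp only [List.length_append]
      omega
    · exact ⟨U.1, ⟨s.1, t.1, rfl⟩, U.2.2.1⟩
    · rintro ⟨W, hlen, hEnc⟩
      obtain ⟨U, ⟨s, t, rfl⟩, hinst⟩ := hEnc
      have hlen' : s.length + U.length + t.length = M := by
        simp only [List.length_append] at hlen; omega
      refine ⟨⟨⟨⟨s.length, by omega⟩, ⟨U.length, by omega⟩⟩,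
        ⟨s, rfl⟩, ⟨U, rfl, hinst, by simp only [Fin.val_mk]; omega⟩,
        ⟨t, by simp only [Fin.val_mk]; omega⟩⟩, rfl⟩
  obtain ⟨g, hg⟩ := hsurj
  haveI : Finite T := by infer_instance
  calc Nat.card {W : List (Fin q) // W.length = M ∧ Encounters (Zimin n) W}
      ≤ Nat.card T := Nat.card_le_card_of_surjective g hg
  _ = ∑ p : Fin (M+1) × Fin (M+1),
        (Nat.card {s : List (Fin q) // s.length = (p.1:ℕ)} *
         (Nat.card {U : List (Fin q) // U.length = (p.2:ℕ) ∧ IsInstance (Zimin n) U ∧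
            (p.1:ℕ) + (p.2:ℕ) ≤ M} *
          Nat.card {t : List (Fin q) // t.length = M - (p.1:ℕ) - (p.2:ℕ)})) := by
      rw [hT, nat_card_sigma]
      exact Finset.sum_congr rfl (fun p _ => by rw [Nat.card_prod, Nat.card_prod])
  _ = _ := by
      apply Finset.sum_congr rfl
      intro p _
      rw [card_words, card_words]
      ring


lemma gauss_sum (M : ℕ) : 2 * (∑ a ∈ Finset.range (M+1), (M - a)) = M * (M+1) := by
  have h1 : ∑ a ∈ Finset.range (M+1), (M - a) = ∑ a ∈ Finset.range (M+1), a := by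
    simpa using Finset.sum_range_reflect (fun a => a) (M+1)
  have h2 := Finset.sum_range_id_mul_two (M+1)
  simp only [Nat.add_sub_cancel] at h2
  calc 2 * (∑ a ∈ Finset.range (M+1), (M - a)) = (∑ a ∈ Finset.range (M+1), a) * 2 := by
        rw [h1]; ring
  _ = (M+1) * M := h2
  _ = M * (M+1) := by ring

lemma cn_le_exp (n q : ℕ) (hn : 1 ≤ n) (hq : 2 ≤ q) :
    ((q:ℝ)/((q:ℝ)-1))^(n-1) ≤ Real.exp (((n:ℝ)-1)/((q:ℝ)-1)) := by
  have hq1 : (1:ℝ) < (q:ℝ) := by exact_mod_cast hq.trans_lt' one_lt_two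
  have hqm : (0:ℝ) < (q:ℝ) - 1 := by linarith
  have h1 : (q:ℝ)/((q:ℝ)-1) = 1/((q:ℝ)-1) + 1 := by field_simp; ring
  have h2 : (q:ℝ)/((q:ℝ)-1) ≤ Real.exp (1/((q:ℝ)-1)) := by
    rw [h1]; exact Real.add_one_le_exp _
  calc ((q:ℝ)/((q:ℝ)-1))^(n-1) ≤ (Real.exp (1/((q:ℝ)-1)))^(n-1) := by
        apply pow_le_pow_left₀ (by positivity) h2
  _ = Real.exp (((n-1:ℕ):ℝ) * (1/((q:ℝ)-1))) := (Real.exp_nat_mul _ _).symm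
  _ = Real.exp (((n:ℝ)-1)/((q:ℝ)-1)) := by
        congr 1
        have : ((n-1:ℕ):ℝ) = (n:ℝ) - 1 := by
          have : (1:ℕ) ≤ n := hn
          push_cast [Nat.cast_sub this]
          ring
        rw [this]
        ring

theorem part1 (n q : ℕ) (hn : 1 ≤ n) (hq : 2 ≤ q) (M : ℕ)
    (hbound : ((M:ℝ)+1)^2 ≤
      2*(q:ℝ)^(2^n-n-1)*Real.exp (-(((n:ℝ)-1)/((q:ℝ)-1)))) :
    ∃ W : List (Fin q), W.length = M ∧ ¬ Encounters (Zimin n) W := by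
  classical
  by_contra hcon
  push_neg at hcon
  have hq1 : (1:ℝ) < (q:ℝ) := by exact_mod_cast hq.trans_lt' one_lt_two
  have hq0 : (0:ℝ) < (q:ℝ) := by linarith
  have hqm : (0:ℝ) < (q:ℝ) - 1 := by linarith
  set c' : ℝ := ((n:ℝ)-1)/((q:ℝ)-1) with hc'
  set cn : ℝ := ((q:ℝ)/((q:ℝ)-1))^(n-1) with hcn
  have hcn0 : 0 < cn := pow_pos (div_pos hq0 hqm) _
  set D : ℕ := 2^n - n - 1 with hD
  set B : ℝ := cn * (q:ℝ)^M / (q:ℝ)^D with hB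
  have hB0 : 0 < B := by positivity
  -- every word of length M encounters, so q^M ≤ EC
  have hEC : (q:ℝ)^M ≤
      (Nat.card {W : List (Fin q) // W.length = M ∧ Encounters (Zimin n) W} : ℝ) := by
    have h1 : q^M ≤ Nat.card {W : List (Fin q) // W.length = M ∧ Encounters (Zimin n) W} := by
      rw [← card_words q M]
      haveI := finite_len_sub q M (Encounters (Zimin n))
      exact Nat.card_le_card_of_injective
        (fun W => ⟨W.1, W.2, hcon W.1 W.2⟩)
        (by rintro ⟨a, ha⟩ ⟨b, hb⟩ hab; simpa using hab)
    exact_mod_cast h1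
  -- EC bound by the sum, then per-term
  have hterm : ∀ p : Fin (M+1) × Fin (M+1),
      ((q^(p.1:ℕ) *
        Nat.card {U : List (Fin q) // U.length = (p.2:ℕ) ∧ IsInstance (Zimin n) U ∧
          (p.1:ℕ) + (p.2:ℕ) ≤ M} *
        q^(M-(p.1:ℕ)-(p.2:ℕ)) : ℕ) : ℝ)
      ≤ if 1 ≤ (p.2:ℕ) ∧ (p.1:ℕ) + (p.2:ℕ) ≤ M then B else 0 := by
    intro p
    set a : ℕ := (p.1:ℕ)
    set ℓ : ℕ := (p.2:ℕ)
    have hmid := mid_card_le q n ℓ (a + ℓ ≤ M)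
    by_cases h1 : 1 ≤ ℓ ∧ a + ℓ ≤ M
    · rw [if_pos h1]
      rw [if_pos h1.2] at hmid
      have hIC := IC_bound q hq n hn ℓ
      calc ((q^a * Nat.card {U : List (Fin q) // U.length = ℓ ∧ IsInstance (Zimin n) U ∧
              a + ℓ ≤ M} * q^(M-a-ℓ) : ℕ) : ℝ)
          ≤ ((q^a * IC q n ℓ * q^(M-a-ℓ) : ℕ) : ℝ) := by
            exact_mod_cast Nat.mul_le_mul (Nat.mul_le_mul le_rfl hmid) le_rfl
      _ = (q:ℝ)^a * (IC q n ℓ : ℝ) * (q:ℝ)^(M-a-ℓ) := by push_cast; ring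
      _ ≤ (q:ℝ)^a * (cn * (q:ℝ)^ℓ / (q:ℝ)^D) * (q:ℝ)^(M-a-ℓ) := by
            have h2 : (0:ℝ) ≤ (q:ℝ)^a := by positivity
            have h3 : (0:ℝ) ≤ (q:ℝ)^(M-a-ℓ) := by positivity
            exact mul_le_mul_of_nonneg_right (mul_le_mul_of_nonneg_left hIC h2) h3
      _ = cn * ((q:ℝ)^a * (q:ℝ)^ℓ * (q:ℝ)^(M-a-ℓ)) / (q:ℝ)^D := by ring
      _ = B := by
            rw [hB, ← pow_add, ← pow_add]
            have : a + ℓ + (M - a - ℓ) = M := by omega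
            rw [this]
    · rw [if_neg h1]
      by_cases h2 : a + ℓ ≤ M
      · have hl0 : ℓ = 0 := by omega
        have hIC0 : IC q n ℓ = 0 := by
          apply IC_eq_zero
          have : 2 ≤ 2^n := by
            calc 2 = 2^1 := by norm_num
            _ ≤ 2^n := Nat.pow_le_pow_right (by norm_num) hn
          omega
        rw [if_pos h2, hIC0] at hmid
        have : Nat.card {U : List (Fin q) // U.length = ℓ ∧ IsInstance (Zimin n) U ∧
            a + ℓ ≤ M} = 0 := Nat.le_zero.mp hmid
        simp [this]
      · rw [if_neg h2] at hmid
        have : Nat.card {U : List (Fin q) // U.length = ℓ ∧ IsInstance (Zimin n) U ∧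
            a + ℓ ≤ M} = 0 := Nat.le_zero.mp hmid
        simp [this]
  -- sum the bound
  have hsum : ∑ p : Fin (M+1) × Fin (M+1),
      (if 1 ≤ (p.2:ℕ) ∧ (p.1:ℕ) + (p.2:ℕ) ≤ M then B else 0)
      = ((∑ a ∈ Finset.range (M+1), (M - a) : ℕ) : ℝ) * B := by
    rw [Fintype.sum_prod_type]
    have hinner : ∀ a : Fin (M+1),
        ∑ ℓ : Fin (M+1), (if 1 ≤ (ℓ:ℕ) ∧ (a:ℕ) + (ℓ:ℕ) ≤ M then B else 0)
        = ((M - (a:ℕ) : ℕ) : ℝ) * B := by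
      intro a
      have ha : (a:ℕ) ≤ M := Nat.lt_succ_iff.mp a.2
      have h1 : ∀ ℓ : Fin (M+1),
          (if 1 ≤ (ℓ:ℕ) ∧ (a:ℕ) + (ℓ:ℕ) ≤ M then B else 0)
          = (if (ℓ:ℕ) ∈ Finset.Icc 1 (M - (a:ℕ)) then B else 0) := by
        intro ℓ
        congr 1
        simp only [Finset.mem_Icc, eq_iff_iff]
        omega
      simp_rw [h1]
      rw [Fin.sum_univ_eq_sum_range (fun ℓ => if ℓ ∈ Finset.Icc 1 (M - (a:ℕ)) then B else 0) (M+1)]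
      rw [Finset.sum_ite_mem]
      have h2 : Finset.range (M+1) ∩ Finset.Icc 1 (M - (a:ℕ)) = Finset.Icc 1 (M - (a:ℕ)) := by
        rw [Finset.inter_eq_right]
        intro x hx
        rw [Finset.mem_Icc] at hx
        rw [Finset.mem_range]
        omega
      rw [h2, Finset.sum_const, Nat.card_Icc, Nat.add_sub_cancel, nsmul_eq_mul]
    calc ∑ a : Fin (M+1), ∑ ℓ : Fin (M+1),
          (if 1 ≤ (ℓ:ℕ) ∧ (a:ℕ) + (ℓ:ℕ) ≤ M then B else 0)
        = ∑ a : Fin (M+1), ((M - (a:ℕ) : ℕ) : ℝ) * B :=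
          Finset.sum_congr rfl (fun a _ => hinner a)
    _ = ((∑ a ∈ Finset.range (M+1), (M - a) : ℕ) : ℝ) * B := by
          rw [← Finset.sum_mul]
          congr 1
          rw [Nat.cast_sum]
          exact Fin.sum_univ_eq_sum_range (fun a => ((M - a : ℕ) : ℝ)) (M+1)
  -- combine
  have hchain : (q:ℝ)^M ≤ ((∑ a ∈ Finset.range (M+1), (M - a) : ℕ) : ℝ) * B := by
    calc (q:ℝ)^M ≤ _ := hEC
    _ ≤ ((∑ p : Fin (M+1) × Fin (M+1),
          q^(p.1:ℕ) *
          Nat.card {U : List (Fin q) // U.length = (p.2:ℕ) ∧ IsInstance (Zimin n) U ∧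
            (p.1:ℕ) + (p.2:ℕ) ≤ M} *
          q^(M-(p.1:ℕ)-(p.2:ℕ)) : ℕ) : ℝ) := by exact_mod_cast EC_le q n M
    _ = ∑ p : Fin (M+1) × Fin (M+1),
          ((q^(p.1:ℕ) *
          Nat.card {U : List (Fin q) // U.length = (p.2:ℕ) ∧ IsInstance (Zimin n) U ∧
            (p.1:ℕ) + (p.2:ℕ) ≤ M} *
          q^(M-(p.1:ℕ)-(p.2:ℕ)) : ℕ) : ℝ) := by push_cast; rfl
    _ ≤ ∑ p : Fin (M+1) × Fin (M+1),
          (if 1 ≤ (p.2:ℕ) ∧ (p.1:ℕ) + (p.2:ℕ) ≤ M then B else 0) :=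
          Finset.sum_le_sum (fun p _ => hterm p)
    _ = _ := hsum
  have hS : (((∑ a ∈ Finset.range (M+1), (M - a) : ℕ) : ℝ)) * 2 = (M:ℝ) * ((M:ℝ)+1) := by
    have h1 : (∑ a ∈ Finset.range (M+1), (M - a)) * 2 = M * (M+1) := by
      rw [Nat.mul_comm]; exact gauss_sum M
    exact_mod_cast h1
  have hfinal : 2 * (q:ℝ)^M < 2 * (q:ℝ)^M := by
    have hexp : cn ≤ Real.exp c' := cn_le_exp n q hn hq
    have hexp0 : 0 < Real.exp c' := Real.exp_pos _
    calc 2 * (q:ℝ)^M ≤ (M:ℝ) * ((M:ℝ)+1) * B := by nlinarith [hchain, hB0]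
    _ < ((M:ℝ)+1)^2 * B := by nlinarith [hB0]
    _ ≤ (2*(q:ℝ)^D*Real.exp (-c')) * B := by
          apply mul_le_mul_of_nonneg_right hbound (le_of_lt hB0)
    _ = 2 * (q:ℝ)^M * (cn * Real.exp (-c')) := by
          rw [hB]
          field_simp
    _ ≤ 2 * (q:ℝ)^M := by
          have h3 : cn * Real.exp (-c') ≤ 1 := by
            rw [Real.exp_neg]
            rw [mul_inv_le_iff₀ hexp0]
            linarith
          nlinarith [pow_pos hq0 M]
  linarith


lemma encounters_zimin_zero {β : Type*} (W : List β) : Encounters (Zimin 0) W :=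
  ⟨[], List.nil_infix, ⟨fun _ => [], by simp [Zimin], by simp [Zimin]⟩⟩

lemma zimin_theorem (q n : ℕ) :
    ∃ M0 : ℕ, ∀ W : List (Fin q), M0 ≤ W.length → Encounters (Zimin n) W := by
  induction n with
  | zero => exact ⟨0, fun W _ => encounters_zimin_zero W⟩
  | succ n ih =>
    obtain ⟨N, hN⟩ := ih
    refine ⟨q^N * (N+1) + N + 1, fun W hW => ?_⟩
    have hblock : ∀ i : Fin (q^N + 1),
        ((W.drop ((i:ℕ)*(N+1))).take N).length = N := by
      intro i
      have hi : (i:ℕ) ≤ q^N := Nat.lt_succ_iff.mp i.2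
      rw [List.length_take, List.length_drop]
      have h2 : (i:ℕ)*(N+1) ≤ q^N*(N+1) := Nat.mul_le_mul_right _ hi
      omega
    haveI hVfin : Fintype {l : List (Fin q) // l.length = N} :=
      (inferInstance : Fintype (List.Vector (Fin q) N))
    have hcard : Fintype.card {l : List (Fin q) // l.length = N} <
        Fintype.card (Fin (q^N + 1)) := by
      rw [← Nat.card_eq_fintype_card, card_words, Fintype.card_fin]
      omega
    obtain ⟨i, j, hij, hfij⟩ := Fintype.exists_ne_map_eq_of_card_lt
      (fun i : Fin (q^N + 1) =>
        (⟨(W.drop ((i:ℕ)*(N+1))).take N, hblock i⟩ : {l : List (Fin q) // l.length = N})) hcard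
    have hfij' : (W.drop ((i:ℕ)*(N+1))).take N = (W.drop ((j:ℕ)*(N+1))).take N :=
      congrArg Subtype.val hfij
    clear hfij
    wlog hlt : (i:ℕ) < (j:ℕ) generalizing i j
    · have hne : (i:ℕ) ≠ (j:ℕ) := fun h => hij (Fin.ext h)
      exact this j i hij.symm hfij'.symm (by omega)
    set p : ℕ := (i:ℕ)*(N+1) with hp
    set p' : ℕ := (j:ℕ)*(N+1) with hp'
    have hpp' : p + (N+1) ≤ p' := by
      have h1 : (i:ℕ)+1 ≤ (j:ℕ) := hlt
      calc p + (N+1) = ((i:ℕ)+1)*(N+1) := by ring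
      _ ≤ (j:ℕ)*(N+1) := Nat.mul_le_mul_right _ h1
    have hp'W : p' + N + 1 ≤ W.length := by
      have hj : (j:ℕ) ≤ q^N := Nat.lt_succ_iff.mp j.2
      have h2 : p' ≤ q^N*(N+1) := Nat.mul_le_mul_right _ hj
      omega
    set W1 : List (Fin q) := W.drop p with hW1
    set d : ℕ := p' - p with hd
    have hdN : N + 1 ≤ d := by omega
    have hW1len : d + N + 1 ≤ W1.length := by
      rw [hW1, List.length_drop]
      omega
    set C : List (Fin q) := W1.take N with hC
    have hdropd : W1.drop d = W.drop p' := by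
      rw [hW1, List.drop_drop]
      congr 1
      omega
    have hCj : (W1.drop d).take N = C := by
      rw [hdropd, hC, hW1]
      exact hfij'.symm
    set e : ℕ := d - N with he
    set E : List (Fin q) := (W1.drop N).take e with hE
    have hClen : C.length = N := by
      rw [hC, hW1, hp]
      exact hblock i
    clear_value W1 d C e E
    have hElen : E.length = e := by
      rw [hE, List.length_take, List.length_drop]
      omega
    have hEne : E ≠ [] := by
      intro h
      rw [h] at hElen
      simp at hElen
      omega
    have hF : W1.take (N + (e + N)) = C ++ (E ++ C) := by
      have h2 : W1.drop (N + e) = W1.drop d := by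
        congr 1
        omega
      rw [List.take_add, List.take_add, List.drop_drop, h2, hCj, ← hE, ← hC]
    -- C encounters Zimin n
    obtain ⟨U, hUinf, hUinst⟩ := hN C (le_of_eq hClen.symm)
    obtain ⟨x, y, hxy⟩ := hUinf
    set Bm : List (Fin q) := y ++ E ++ x with hBm
    have hBne : Bm ≠ [] := by
      intro h
      rw [hBm] at h
      simp only [List.append_eq_nil_iff] at h
      exact hEne h.1.2
    refine ⟨U ++ Bm ++ U, ?_, isInstance_zimin_succ.mpr ⟨U, Bm, hUinst, hBne, rfl⟩⟩
    have h1 : U ++ Bm ++ U <:+: W1.take (N + (e + N)) := by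
      refine ⟨x, y, ?_⟩
      rw [hF, ← hxy, hBm]
      simp [List.append_assoc]
    have h3 : W1 <:+: W := by
      rw [hW1]
      exact (List.drop_suffix p W).isInfix
    exact h1.trans (((List.take_prefix _ _).isInfix).trans h3)

theorem stmt3 (n q : ℕ) (hn : 1 ≤ n) (hq : 2 ≤ q) :
    (∀ M : ℕ, 1 ≤ M →
      ((M : ℝ) + 1) ^ 2 ≤
          2 * (q : ℝ) ^ (2 ^ n - n - 1) * Real.exp (-(((n : ℝ) - 1) / ((q : ℝ) - 1))) →
      ∃ W : List (Fin q), W.length = M ∧ ¬ Encounters (Zimin n) W) ∧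
    Real.sqrt (2 * (q : ℝ) ^ (2 ^ n) /
        ((q : ℝ) ^ (n + 1) * Real.exp (((n : ℝ) - 1) / ((q : ℝ) - 1)))) - 1 ≤ (fZ n q : ℝ) := by
  have hq1 : (1:ℝ) < (q:ℝ) := by exact_mod_cast hq.trans_lt' one_lt_two
  have hq0 : (0:ℝ) < (q:ℝ) := by linarith
  constructor
  · intro M _ hbound
    exact part1 n q hn hq M hbound
  · set c' : ℝ := ((n:ℝ)-1)/((q:ℝ)-1) with hc'
    set R : ℝ := 2*(q:ℝ)^(2^n-n-1)*Real.exp (-c') with hR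
    set R' : ℝ := 2*(q:ℝ)^(2^n)/((q:ℝ)^(n+1)*Real.exp c') with hR'
    have hexp0 : (0:ℝ) < Real.exp c' := Real.exp_pos _
    have hRR' : R' = R := by
      have hpow : (q:ℝ)^(2^n) = (q:ℝ)^(2^n-n-1) * (q:ℝ)^(n+1) := by
        rw [← pow_add]
        congr 1
        have := Nat.lt_two_pow_self (n := n)
        omega
      rw [hR, hR', hpow, Real.exp_neg]
      field_simp
    obtain ⟨M0, hM0⟩ := zimin_theorem q n
    have hne : Set.Nonempty {M | ∀ W : List (Fin q), W.length = M → Encounters (Zimin n) W} :=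
      ⟨M0, fun W hW => hM0 W (le_of_eq hW.symm)⟩
    have hmem := Nat.sInf_mem hne
    set M : ℕ := fZ n q with hM
    have hmem' : ∀ W : List (Fin q), W.length = M → Encounters (Zimin n) W := hmem
    have hM1 : 1 ≤ M := by
      by_contra h
      have hM0' : M = 0 := by omega
      have henc := hmem' [] (by simp [hM0'])
      obtain ⟨U, hinf, hinst⟩ := henc
      have hU : U = [] := List.infix_nil.mp hinf
      exact isInstance_zimin_ne_nil hn hinst hU
    have hnotle : ¬ (((M:ℝ)+1)^2 ≤ R) := by
      intro hle
      obtain ⟨W, hWlen, hWenc⟩ := part1 n q hn hq M hle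
      exact hWenc (hmem' W hWlen)
    have hRM : R' < ((M:ℝ)+1)^2 := by
      rw [hRR']
      linarith [not_le.mp hnotle]
    have hsqrt : Real.sqrt R' ≤ (M:ℝ)+1 := by
      have h1 : Real.sqrt R' ≤ Real.sqrt (((M:ℝ)+1)^2) := Real.sqrt_le_sqrt (le_of_lt hRM)
      rw [Real.sqrt_sq (by positivity)] at h1
      exact h1
    linarith
end
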